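/- Let H = P ⊗ Q where P ∈ ℝ^{m×m} and Q ∈ ℝ^{n×n} are symmetric, and let U ∈ ℝ^{m×r}, V ∈ ℝ^{n×r} have orthonormal columns. Then the quadratic form vec(U V^T)^T H vec(U V^T) equals trace((U^T P U)(V^T Q V)) and is bounded above by Σ_{i=1}^r σ_{p,i} σ_{q,i}, where σ_{p,1} ≥ … ≥ σ_{p,m} and σ_{q,1} ≥ … ≥ σ_{q,n} are the singular values of P and Q respectively. -/

import Mathlib

open scoped BigOperators Kronecker
open Matrix Polynomial

/-- The (unsorted) singular values of a real matrix: the square roots of the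
eigenvalues of `Aᴴ * A`. -/
noncomputable def singVals {m n : ℕ} (A : Matrix (Fin m) (Fin n) ℝ) :
    Fin n → ℝ :=
  fun j => Real.sqrt ((Matrix.isHermitian_conjTranspose_mul_self A).eigenvalues j)

/-- Row-wise vectorization of a matrix. -/
def vecr {m n : ℕ} (A : Matrix (Fin m) (Fin n) ℝ) : Fin m × Fin n → ℝ :=
  fun p => A p.1 p.2

/-! ### Auxiliary lemmas -/

lemma kron_mulVec {m n m' n' : ℕ} (P : Matrix (Fin m) (Fin m') ℝ) (Q : Matrix (Fin n) (Fin n') ℝ)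
    (S : Matrix (Fin m') (Fin n') ℝ) :
    (P ⊗ₖ Q) *ᵥ vecr S = vecr (P * S * Qᵀ) := by
  funext p
  obtain ⟨i, j⟩ := p
  simp only [mulVec, dotProduct, vecr, kroneckerMap_apply, mul_apply, transpose_apply,
    Fintype.sum_prod_type, Finset.sum_mul]
  rw [Finset.sum_comm]
  exact Finset.sum_congr rfl fun k _ => Finset.sum_congr rfl fun l _ => by ring

lemma vecr_dot {m n : ℕ} (S T : Matrix (Fin m) (Fin n) ℝ) :
    vecr S ⬝ᵥ vecr T = (Sᵀ * T).trace := by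
  simp only [dotProduct, vecr, trace, diag, mul_apply, transpose_apply, Fintype.sum_prod_type]
  exact Finset.sum_comm

/-- indicator of `x ≤ k` -/
noncomputable def chi (x k : ℕ) : ℝ := if x ≤ k then 1 else 0

lemma chi_nonneg (x k : ℕ) : 0 ≤ chi x k := by unfold chi; split_ifs <;> norm_num

lemma chi_le_one (x k : ℕ) : chi x k ≤ 1 := by unfold chi; split_ifs <;> norm_num

lemma chi_of_le {x k : ℕ} (h : x ≤ k) : chi x k = 1 := if_pos h

lemma chi_min (x k l : ℕ) : chi x (min k l) ≤ chi x k * chi x l := by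
  unfold chi
  by_cases h : x ≤ min k l
  · rw [if_pos h, if_pos (le_trans h (min_le_left _ _)), if_pos (le_trans h (min_le_right _ _))]
    norm_num
  · rw [if_neg h]
    positivity

lemma card_filter_le_fin (m k : ℕ) :
    (Finset.filter (fun i : Fin m => (i : ℕ) ≤ k) Finset.univ).card = min (k+1) m := by
  have h : (Finset.filter (fun i : Fin m => (i : ℕ) ≤ k) Finset.univ).card
      = (((Finset.univ : Finset (Fin m)).map Fin.valEmbedding).filter fun i : ℕ => i ≤ k).card := by
    rw [Finset.filter_map, Finset.card_map]
    rfl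
  rw [h, Fin.map_valEmbedding_univ]
  have h2 : (Finset.Iio m).filter (fun i => i ≤ k) = Finset.range (min (k+1) m) := by
    ext t
    simp only [Finset.mem_filter, Finset.mem_Iio, Finset.mem_range, lt_min_iff]
    omega
  rw [h2, Finset.card_range]

lemma sum_chi_fin (m k : ℕ) :
    ∑ i : Fin m, chi (i : ℕ) k = (min (k+1) m : ℕ) := by
  unfold chi
  rw [Finset.sum_boole, card_filter_le_fin]

set_option maxHeartbeats 1000000 in
/-- Hardy–Littlewood–Pólya-type rearrangement bound for doubly substochastic weights. -/
lemma abel_core {r m n : ℕ} (hrm : r ≤ m) (hrn : r ≤ n)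
    (a : Fin m → ℝ) (ha : Antitone a) (ha0 : ∀ i, 0 ≤ a i)
    (b : Fin n → ℝ) (hb : Antitone b) (hb0 : ∀ j, 0 ≤ b j)
    (c : Fin m → Fin n → ℝ) (hc0 : ∀ i j, 0 ≤ c i j)
    (hrow : ∀ i, ∑ j, c i j ≤ 1) (hcol : ∀ j, ∑ i, c i j ≤ 1)
    (htot : ∑ i, ∑ j, c i j ≤ r) :
    ∑ i, ∑ j, a i * b j * c i j
      ≤ ∑ t : Fin r, a (Fin.castLE hrm t) * b (Fin.castLE hrn t) := by
  classical
  set A : ℕ → ℝ := fun i => if h : i < m then a ⟨i, h⟩ else 0 with hAdef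
  set B : ℕ → ℝ := fun j => if h : j < n then b ⟨j, h⟩ else 0 with hBdef
  set δ : ℕ → ℝ := fun k => A k - A (k+1) with hδdef
  set ε : ℕ → ℝ := fun l => B l - B (l+1) with hεdef
  have hAm : A m = 0 := by simp [hAdef]
  have hBn : B n = 0 := by simp [hBdef]
  have hδ0 : ∀ k, 0 ≤ δ k := by
    intro k
    have h : A (k+1) ≤ A k := by
      simp only [hAdef]
      split_ifs with h1 h2
      · exact ha (by simp [Fin.mk_le_mk])
      · omega
      · exact ha0 _
      · exact le_refl 0
    simpa [hδdef, sub_nonneg] using h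
  have hε0 : ∀ l, 0 ≤ ε l := by
    intro l
    have h : B (l+1) ≤ B l := by
      simp only [hBdef]
      split_ifs with h1 h2
      · exact hb (by simp [Fin.mk_le_mk])
      · omega
      · exact hb0 _
      · exact le_refl 0
    simpa [hεdef, sub_nonneg] using h
  have hAe : ∀ i : Fin m, a i = ∑ k ∈ Finset.range m, chi (i:ℕ) k * δ k := by
    intro i
    have h0 : ∀ k, chi (i:ℕ) k * δ k = if (i:ℕ) ≤ k then δ k else 0 := by
      intro k; unfold chi; split_ifs <;> simp
    simp_rw [h0]
    rw [← Finset.sum_filter]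
    have h1 : (Finset.range m).filter (fun k => (i:ℕ) ≤ k) = Finset.Ico (i:ℕ) m := by
      ext t
      simp only [Finset.mem_filter, Finset.mem_range, Finset.mem_Ico]
      omega
    rw [h1, Finset.sum_Ico_eq_sub _ (le_of_lt i.isLt),
      Finset.sum_range_sub' A, Finset.sum_range_sub' A]
    simp [hAm, hAdef, i.isLt]
  have hBe : ∀ j : Fin n, b j = ∑ l ∈ Finset.range n, chi (j:ℕ) l * ε l := by
    intro j
    have h0 : ∀ l, chi (j:ℕ) l * ε l = if (j:ℕ) ≤ l then ε l else 0 := by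
      intro l; unfold chi; split_ifs <;> simp
    simp_rw [h0]
    rw [← Finset.sum_filter]
    have h1 : (Finset.range n).filter (fun l => (j:ℕ) ≤ l) = Finset.Ico (j:ℕ) n := by
      ext t
      simp only [Finset.mem_filter, Finset.mem_range, Finset.mem_Ico]
      omega
    rw [h1, Finset.sum_Ico_eq_sub _ (le_of_lt j.isLt),
      Finset.sum_range_sub' B, Finset.sum_range_sub' B]
    simp [hBn, hBdef, j.isLt]
  have key : ∀ (i : Fin m) (j : Fin n), a i * b j * c i j
      = ∑ k ∈ Finset.range m, ∑ l ∈ Finset.range n,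
          δ k * ε l * (chi (i:ℕ) k * chi (j:ℕ) l * c i j) := by
    intro i j
    rw [hAe i, hBe j, Finset.sum_mul_sum, Finset.sum_mul]
    refine Finset.sum_congr rfl fun k _ => ?_
    rw [Finset.sum_mul]
    exact Finset.sum_congr rfl fun l _ => by ring
  set T : ℕ → ℕ → ℝ := fun k l => ∑ i : Fin m, ∑ j : Fin n,
      chi (i:ℕ) k * chi (j:ℕ) l * c i j with hTdef
  have lhs_eq : ∑ i, ∑ j, a i * b j * c i j
      = ∑ k ∈ Finset.range m, ∑ l ∈ Finset.range n, δ k * ε l * T k l := by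
    calc ∑ i, ∑ j, a i * b j * c i j
        = ∑ i : Fin m, ∑ j : Fin n, ∑ k ∈ Finset.range m, ∑ l ∈ Finset.range n,
            δ k * ε l * (chi (i:ℕ) k * chi (j:ℕ) l * c i j) :=
          Finset.sum_congr rfl fun i _ => Finset.sum_congr rfl fun j _ => key i j
      _ = ∑ i : Fin m, ∑ k ∈ Finset.range m, ∑ j : Fin n, ∑ l ∈ Finset.range n,
            δ k * ε l * (chi (i:ℕ) k * chi (j:ℕ) l * c i j) :=
          Finset.sum_congr rfl fun i _ => Finset.sum_comm
      _ = ∑ k ∈ Finset.range m, ∑ i : Fin m, ∑ j : Fin n, ∑ l ∈ Finset.range n,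
            δ k * ε l * (chi (i:ℕ) k * chi (j:ℕ) l * c i j) := Finset.sum_comm
      _ = ∑ k ∈ Finset.range m, ∑ i : Fin m, ∑ l ∈ Finset.range n, ∑ j : Fin n,
            δ k * ε l * (chi (i:ℕ) k * chi (j:ℕ) l * c i j) :=
          Finset.sum_congr rfl fun k _ => Finset.sum_congr rfl fun i _ => Finset.sum_comm
      _ = ∑ k ∈ Finset.range m, ∑ l ∈ Finset.range n, ∑ i : Fin m, ∑ j : Fin n,
            δ k * ε l * (chi (i:ℕ) k * chi (j:ℕ) l * c i j) :=
          Finset.sum_congr rfl fun k _ => Finset.sum_comm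
      _ = ∑ k ∈ Finset.range m, ∑ l ∈ Finset.range n, δ k * ε l * T k l := by
          refine Finset.sum_congr rfl fun k _ => Finset.sum_congr rfl fun l _ => ?_
          simp only [hTdef, Finset.mul_sum]
  set N : ℕ → ℕ → ℝ := fun k l => ∑ t : Fin r, chi (t:ℕ) k * chi (t:ℕ) l with hNdef
  have rhs_eq : ∑ t : Fin r, a (Fin.castLE hrm t) * b (Fin.castLE hrn t)
      = ∑ k ∈ Finset.range m, ∑ l ∈ Finset.range n, δ k * ε l * N k l := by
    calc ∑ t : Fin r, a (Fin.castLE hrm t) * b (Fin.castLE hrn t)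
        = ∑ t : Fin r, ∑ k ∈ Finset.range m, ∑ l ∈ Finset.range n,
            δ k * ε l * (chi (t:ℕ) k * chi (t:ℕ) l) := by
          refine Finset.sum_congr rfl fun t _ => ?_
          rw [hAe (Fin.castLE hrm t), hBe (Fin.castLE hrn t), Finset.sum_mul_sum]
          refine Finset.sum_congr rfl fun k _ => Finset.sum_congr rfl fun l _ => ?_
          simp only [Fin.coe_castLE]
          ring
      _ = ∑ k ∈ Finset.range m, ∑ t : Fin r, ∑ l ∈ Finset.range n,
            δ k * ε l * (chi (t:ℕ) k * chi (t:ℕ) l) := Finset.sum_comm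
      _ = ∑ k ∈ Finset.range m, ∑ l ∈ Finset.range n, ∑ t : Fin r,
            δ k * ε l * (chi (t:ℕ) k * chi (t:ℕ) l) :=
          Finset.sum_congr rfl fun k _ => Finset.sum_comm
      _ = ∑ k ∈ Finset.range m, ∑ l ∈ Finset.range n, δ k * ε l * N k l := by
          refine Finset.sum_congr rfl fun k _ => Finset.sum_congr rfl fun l _ => ?_
          simp only [hNdef, Finset.mul_sum]
  rw [lhs_eq, rhs_eq]
  refine Finset.sum_le_sum fun k _ => Finset.sum_le_sum fun l _ => ?_
  refine mul_le_mul_of_nonneg_left ?_ (mul_nonneg (hδ0 k) (hε0 l))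
  have hchi_c : ∀ (i : Fin m) (j : Fin n),
      chi (i:ℕ) k * chi (j:ℕ) l * c i j ≤ c i j := fun i j =>
    mul_le_of_le_one_left (hc0 i j) (mul_le_one₀ (chi_le_one _ _) (chi_nonneg _ _) (chi_le_one _ _))
  have hT3 : T k l ≤ r :=
    le_trans (Finset.sum_le_sum fun i _ => Finset.sum_le_sum fun j _ => hchi_c i j) htot
  have hT1 : T k l ≤ (k + 1 : ℕ) := by
    have h1 : ∀ i : Fin m, ∑ j : Fin n, chi (i:ℕ) k * chi (j:ℕ) l * c i j ≤ chi (i:ℕ) k := by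
      intro i
      calc ∑ j : Fin n, chi (i:ℕ) k * chi (j:ℕ) l * c i j
          ≤ ∑ j : Fin n, chi (i:ℕ) k * c i j := by
            refine Finset.sum_le_sum fun j _ => ?_
            have h2 : chi (i:ℕ) k * chi (j:ℕ) l * c i j
                = chi (j:ℕ) l * (chi (i:ℕ) k * c i j) := by ring
            rw [h2]
            exact mul_le_of_le_one_left (mul_nonneg (chi_nonneg _ _) (hc0 i j)) (chi_le_one _ _)
        _ = chi (i:ℕ) k * ∑ j : Fin n, c i j := (Finset.mul_sum _ _ _).symm
        _ ≤ chi (i:ℕ) k * 1 := mul_le_mul_of_nonneg_left (hrow i) (chi_nonneg _ _)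
        _ = chi (i:ℕ) k := mul_one _
    calc T k l ≤ ∑ i : Fin m, chi (i:ℕ) k := Finset.sum_le_sum fun i _ => h1 i
      _ = (min (k+1) m : ℕ) := sum_chi_fin m k
      _ ≤ (k + 1 : ℕ) := Nat.cast_le.mpr (Nat.min_le_left _ _)
  have hT2 : T k l ≤ (l + 1 : ℕ) := by
    have hcomm : T k l = ∑ j : Fin n, ∑ i : Fin m,
        chi (i:ℕ) k * chi (j:ℕ) l * c i j := Finset.sum_comm
    rw [hcomm]
    have h1 : ∀ j : Fin n, ∑ i : Fin m, chi (i:ℕ) k * chi (j:ℕ) l * c i j ≤ chi (j:ℕ) l := by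
      intro j
      calc ∑ i : Fin m, chi (i:ℕ) k * chi (j:ℕ) l * c i j
          ≤ ∑ i : Fin m, chi (j:ℕ) l * c i j := by
            refine Finset.sum_le_sum fun i _ => ?_
            have h2 : chi (i:ℕ) k * chi (j:ℕ) l * c i j
                = chi (i:ℕ) k * (chi (j:ℕ) l * c i j) := by ring
            rw [h2]
            exact mul_le_of_le_one_left (mul_nonneg (chi_nonneg _ _) (hc0 i j)) (chi_le_one _ _)
        _ = chi (j:ℕ) l * ∑ i : Fin m, c i j := (Finset.mul_sum _ _ _).symm
        _ ≤ chi (j:ℕ) l * 1 := mul_le_mul_of_nonneg_left (hcol j) (chi_nonneg _ _)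
        _ = chi (j:ℕ) l := mul_one _
    calc ∑ j : Fin n, ∑ i : Fin m, chi (i:ℕ) k * chi (j:ℕ) l * c i j
        ≤ ∑ j : Fin n, chi (j:ℕ) l := Finset.sum_le_sum fun j _ => h1 j
      _ = (min (l+1) n : ℕ) := sum_chi_fin n l
      _ ≤ (l + 1 : ℕ) := Nat.cast_le.mpr (Nat.min_le_left _ _)
  rcases le_or_gt r (min k l + 1) with hcase | hcase
  · have hN : N k l = r := by
      have h : ∀ t : Fin r, chi (t:ℕ) k * chi (t:ℕ) l = 1 := by
        intro t
        have htk : (t:ℕ) ≤ k := by have := t.isLt; omega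
        have htl : (t:ℕ) ≤ l := by have := t.isLt; omega
        rw [chi_of_le htk, chi_of_le htl, mul_one]
      simp only [hNdef, h, Finset.sum_const, Finset.card_univ, Fintype.card_fin, nsmul_eq_mul,
        mul_one]
    rw [hN]; exact hT3
  · have hN : ((min k l + 1 : ℕ) : ℝ) ≤ N k l := by
      calc ((min k l + 1 : ℕ) : ℝ)
          = ((min (min k l + 1) r : ℕ) : ℝ) := by congr 1; omega
        _ = ∑ t : Fin r, chi (t:ℕ) (min k l) := (sum_chi_fin r (min k l)).symm
        _ ≤ N k l := Finset.sum_le_sum fun t _ => chi_min _ _ _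
    calc T k l ≤ ((min k l + 1 : ℕ) : ℝ) := by
          rcases Nat.le_total k l with h | h
          · rw [Nat.min_eq_left h]; exact hT1
          · rw [Nat.min_eq_right h]; exact hT2
      _ ≤ N k l := hN

lemma exists_perm_comp_of_multiset_eq {k : ℕ} (f g : Fin k → ℝ)
    (h : Multiset.map f Finset.univ.val = Multiset.map g Finset.univ.val) :
    ∃ e : Equiv.Perm (Fin k), f = g ∘ e := by
  have hperm : List.Perm (List.ofFn f) (List.ofFn g) := by
    rw [← Multiset.coe_eq_coe, ← Fin.univ_val_map, ← Fin.univ_val_map]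
    exact h
  have h1 : (f ∘ Tuple.sort f) = (g ∘ Tuple.sort g) := by
    have hp : List.Perm (List.ofFn (f ∘ Tuple.sort f)) (List.ofFn (g ∘ Tuple.sort g)) :=
      ((Tuple.sort f).ofFn_comp_perm f).trans
        (hperm.trans ((Tuple.sort g).ofFn_comp_perm g).symm)
    have he := List.Perm.eq_of_sortedLE
      (Tuple.monotone_sort f).sortedLE_ofFn (Tuple.monotone_sort g).sortedLE_ofFn hp
    exact List.ofFn_injective he
  refine ⟨(Tuple.sort f).symm.trans (Tuple.sort g), ?_⟩
  funext i
  have h2 := congr_fun h1 ((Tuple.sort f).symm i)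
  simpa using h2

lemma det_smul_one_sub_conj {k : ℕ} (W : Matrix (Fin k) (Fin k) ℝ)
    (hW : W ∈ Matrix.unitaryGroup (Fin k) ℝ) (v : Fin k → ℝ) (x : ℝ) :
    (x • (1 : Matrix (Fin k) (Fin k) ℝ) - W * diagonal v * star W).det
      = ∏ i, (x - v i) := by
  have h1 : x • (1 : Matrix (Fin k) (Fin k) ℝ) - W * diagonal v * star W
      = W * (x • (1 : Matrix (Fin k) (Fin k) ℝ) - diagonal v) * star W := by
    rw [Matrix.mul_sub, Matrix.sub_mul]
    congr 1
    rw [Matrix.mul_smul, Matrix.mul_one, Matrix.smul_mul]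
    rw [(Matrix.mem_unitaryGroup_iff).mp hW]
  rw [h1, Matrix.det_mul, Matrix.det_mul]
  have h2 : W.det * ((x • (1 : Matrix (Fin k) (Fin k) ℝ) - diagonal v).det) * (star W).det
      = ((x • (1 : Matrix (Fin k) (Fin k) ℝ) - diagonal v).det) * (W.det * (star W).det) := by
    ring
  rw [h2, ← Matrix.det_mul, (Matrix.mem_unitaryGroup_iff).mp hW, Matrix.det_one, mul_one]
  rw [Matrix.smul_one_eq_diagonal, Matrix.diagonal_sub, Matrix.det_diagonal]

lemma multiset_eigs_of_two_diag {k : ℕ} (M : Matrix (Fin k) (Fin k) ℝ)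
    (W W' : Matrix (Fin k) (Fin k) ℝ)
    (hW : W ∈ Matrix.unitaryGroup (Fin k) ℝ) (hW' : W' ∈ Matrix.unitaryGroup (Fin k) ℝ)
    (v w : Fin k → ℝ)
    (h1 : M = W * diagonal v * star W) (h2 : M = W' * diagonal w * star W') :
    Multiset.map v Finset.univ.val = Multiset.map w Finset.univ.val := by
  have hdet : ∀ x : ℝ, ∏ i, (x - v i) = ∏ i, (x - w i) := by
    intro x
    rw [← det_smul_one_sub_conj W hW v x, ← det_smul_one_sub_conj W' hW' w x, ← h1, ← h2]
  have hpoly : ((Multiset.map v Finset.univ.val).map fun a => X - C a).prod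
      = ((Multiset.map w Finset.univ.val).map fun a => X - C a).prod := by
    apply Polynomial.funext
    intro x
    rw [eval_multiset_prod, eval_multiset_prod]
    simp only [Multiset.map_map, Function.comp]
    simp only [eval_sub, eval_X, eval_C]
    rw [← Finset.prod_eq_multiset_prod, ← Finset.prod_eq_multiset_prod]
    exact hdet x
  have h := congr_arg Polynomial.roots hpoly
  rwa [roots_multiset_prod_X_sub_C, roots_multiset_prod_X_sub_C] at h

lemma singVals_multiset_eq_abs_eigen {m : ℕ} (P : Matrix (Fin m) (Fin m) ℝ)
    (hP' : P.IsHermitian) :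
    Multiset.map (fun i => |hP'.eigenvalues i|) Finset.univ.val
      = Multiset.map (singVals P) Finset.univ.val := by
  have hB : (Pᴴ * P).IsHermitian := Matrix.isHermitian_conjTranspose_mul_self P
  set W : Matrix (Fin m) (Fin m) ℝ := (hP'.eigenvectorUnitary : Matrix (Fin m) (Fin m) ℝ)
  have hWu : W ∈ Matrix.unitaryGroup (Fin m) ℝ := hP'.eigenvectorUnitary.2
  set W' : Matrix (Fin m) (Fin m) ℝ := (hB.eigenvectorUnitary : Matrix (Fin m) (Fin m) ℝ)
  have hWu' : W' ∈ Matrix.unitaryGroup (Fin m) ℝ := hB.eigenvectorUnitary.2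
  have hPspec : P = W * diagonal hP'.eigenvalues * star W := by
    have h := hP'.spectral_theorem
    rw [Unitary.conjStarAlgAut_apply] at h
    rwa [RCLike.ofReal_real_eq_id, Function.id_comp] at h
  have hBspec : Pᴴ * P = W' * diagonal hB.eigenvalues * star W' := by
    have h := hB.spectral_theorem
    rw [Unitary.conjStarAlgAut_apply] at h
    rwa [RCLike.ofReal_real_eq_id, Function.id_comp] at h
  have hsq : Pᴴ * P = W * diagonal (fun i => hP'.eigenvalues i ^ 2) * star W := by
    rw [hP'.eq]
    calc P * P
        = (W * diagonal hP'.eigenvalues * star W) * (W * diagonal hP'.eigenvalues * star W) := by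
          rw [← hPspec]
      _ = W * diagonal (fun i => hP'.eigenvalues i ^ 2) * star W := by
          rw [show (W * diagonal hP'.eigenvalues * star W) * (W * diagonal hP'.eigenvalues * star W)
              = W * (diagonal hP'.eigenvalues * (star W * W) * diagonal hP'.eigenvalues)
                * star W by simp only [Matrix.mul_assoc]]
          rw [(Matrix.mem_unitaryGroup_iff').mp hWu, Matrix.mul_one,
            Matrix.diagonal_mul_diagonal]
          congr 2
          funext i
          ring
  have hms := multiset_eigs_of_two_diag (Pᴴ * P) W W' hWu hWu'
    (fun i => hP'.eigenvalues i ^ 2) hB.eigenvalues hsq hBspec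
  have h := congr_arg (Multiset.map Real.sqrt) hms
  rw [Multiset.map_map, Multiset.map_map] at h
  have h1 : (Real.sqrt ∘ fun i => hP'.eigenvalues i ^ 2) = fun i => |hP'.eigenvalues i| :=
    funext fun i => by simp [Function.comp, Real.sqrt_sq_eq_abs]
  have h2 : (Real.sqrt ∘ hB.eigenvalues) = singVals P := funext fun j => rfl
  rw [h1, h2] at h
  exact h

lemma compression_le {m r : ℕ} (U : Matrix (Fin m) (Fin r) ℝ) (hU : Uᵀ * U = 1)
    (w : Fin m → ℝ) :
    (Uᵀ *ᵥ w) ⬝ᵥ (Uᵀ *ᵥ w) ≤ w ⬝ᵥ w := by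
  set u : Fin r → ℝ := Uᵀ *ᵥ w with hu
  set p : Fin m → ℝ := w - U *ᵥ u with hp
  have h0 : 0 ≤ p ⬝ᵥ p := Finset.sum_nonneg fun i _ => mul_self_nonneg _
  have h1 : w ⬝ᵥ (U *ᵥ u) = u ⬝ᵥ u := by
    rw [dotProduct_mulVec, ← Matrix.mulVec_transpose, ← hu]
  have h2 : (U *ᵥ u) ⬝ᵥ (U *ᵥ u) = u ⬝ᵥ u := by
    rw [dotProduct_mulVec, ← Matrix.mulVec_transpose, Matrix.mulVec_mulVec, hU, Matrix.one_mulVec]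
  have h3 : (U *ᵥ u) ⬝ᵥ w = u ⬝ᵥ u := by rw [dotProduct_comm]; exact h1
  have hexp : p ⬝ᵥ p = w ⬝ᵥ w - u ⬝ᵥ u := by
    rw [hp, sub_dotProduct, dotProduct_sub, dotProduct_sub, h1, h2, h3]
    ring
  linarith [h0, hexp ▸ h0]

lemma diag_conj_eq {m r k : ℕ} (U : Matrix (Fin m) (Fin r) ℝ)
    (X : Matrix (Fin m) (Fin k) ℝ) (i : Fin k) :
    (Xᵀ * (U * (Uᵀ * X))) i i
      = (Uᵀ *ᵥ (fun a => X a i)) ⬝ᵥ (Uᵀ *ᵥ (fun a => X a i)) := by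
  simp only [mul_apply, mulVec, dotProduct, transpose_apply]
  simp_rw [Finset.mul_sum]
  rw [Finset.sum_comm]
  refine Finset.sum_congr rfl fun b _ => ?_
  simp_rw [Finset.sum_mul]
  rw [Finset.sum_comm]
  exact Finset.sum_congr rfl fun a _ => Finset.sum_congr rfl fun c _ => by ring

lemma diag_conj_le {m r k : ℕ} (U : Matrix (Fin m) (Fin r) ℝ) (hU : Uᵀ * U = 1)
    (X : Matrix (Fin m) (Fin k) ℝ) (hX : Xᵀ * X = 1) (i : Fin k) :
    (Xᵀ * (U * (Uᵀ * X))) i i ≤ 1 := by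
  rw [diag_conj_eq]
  have hw : (fun a => X a i) ⬝ᵥ (fun a => X a i) = 1 := by
    have h := congr_fun (congr_fun hX i) i
    simpa [mul_apply, dotProduct, transpose_apply, one_apply] using h
  calc (Uᵀ *ᵥ fun a => X a i) ⬝ᵥ (Uᵀ *ᵥ fun a => X a i)
      ≤ (fun a => X a i) ⬝ᵥ (fun a => X a i) := compression_le U hU _
    _ = 1 := hw

lemma trace_diag_conj {m n : ℕ} (v : Fin m → ℝ) (w : Fin n → ℝ)
    (M : Matrix (Fin m) (Fin n) ℝ) :
    (diagonal v * M * diagonal w * Mᵀ).trace = ∑ i, ∑ j, v i * w j * (M i j)^2 := by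
  have h : ∀ i j, (diagonal v * M * diagonal w) i j = v i * M i j * w j := by
    intro i j
    rw [Matrix.mul_diagonal, Matrix.diagonal_mul]
  simp only [trace, diag, mul_apply (M := diagonal v * M * diagonal w), transpose_apply, h]
  exact Finset.sum_congr rfl fun i _ => Finset.sum_congr rfl fun j _ => by ring

/-- For a Kronecker-structured symmetric `H = P ⊗ Q` and semi-orthogonal
`U`, `V`, the quadratic form `vec(UVᵀ)ᵀ H vec(UVᵀ)` equals
`trace((Uᵀ P U)(Vᵀ Q V))` and is at most `Σ_{i=1}^r σ_{p,i} σ_{q,i}` where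
`σp`, `σq` are the singular values of `P`, `Q` sorted in decreasing order. -/
theorem kronecker_quadratic_form_von_neumann_bound
    {m n r : ℕ} (hrm : r ≤ m) (hrn : r ≤ n)
    (P : Matrix (Fin m) (Fin m) ℝ) (hP : Pᵀ = P)
    (Q : Matrix (Fin n) (Fin n) ℝ) (hQ : Qᵀ = Q)
    (U : Matrix (Fin m) (Fin r) ℝ) (V : Matrix (Fin n) (Fin r) ℝ)
    (hU : Uᵀ * U = 1) (hV : Vᵀ * V = 1)
    (σp : Fin m → ℝ) (hσp_sort : Antitone σp)
    (hσp : ∃ e : Equiv.Perm (Fin m), σp = singVals P ∘ e)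
    (σq : Fin n → ℝ) (hσq_sort : Antitone σq)
    (hσq : ∃ e : Equiv.Perm (Fin n), σq = singVals Q ∘ e) :
    vecr (U * Vᵀ) ⬝ᵥ ((P ⊗ₖ Q) *ᵥ vecr (U * Vᵀ)) =
      ((Uᵀ * P * U) * (Vᵀ * Q * V)).trace ∧
    vecr (U * Vᵀ) ⬝ᵥ ((P ⊗ₖ Q) *ᵥ vecr (U * Vᵀ)) ≤
      ∑ i : Fin r, σp (Fin.castLE hrm i) * σq (Fin.castLE hrn i) := by
  classical
  have heq : vecr (U * Vᵀ) ⬝ᵥ ((P ⊗ₖ Q) *ᵥ vecr (U * Vᵀ))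
      = ((Uᵀ * P * U) * (Vᵀ * Q * V)).trace := by
    rw [kron_mulVec, vecr_dot, hQ, transpose_mul, transpose_transpose]
    rw [show V * Uᵀ * (P * (U * Vᵀ) * Q) = V * (Uᵀ * P * U * (Vᵀ * Q)) by
      simp only [Matrix.mul_assoc]]
    rw [Matrix.trace_mul_comm]
    simp only [Matrix.mul_assoc]
  refine ⟨heq, ?_⟩
  rw [heq]
  -- spectral data
  have hP' : P.IsHermitian := by
    rw [Matrix.IsHermitian, Matrix.conjTranspose_eq_transpose_of_trivial]; exact hP
  have hQ' : Q.IsHermitian := by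
    rw [Matrix.IsHermitian, Matrix.conjTranspose_eq_transpose_of_trivial]; exact hQ
  set lam : Fin m → ℝ := hP'.eigenvalues with hlam
  set mu : Fin n → ℝ := hQ'.eigenvalues with hmu
  set W : Matrix (Fin m) (Fin m) ℝ := (hP'.eigenvectorUnitary : Matrix (Fin m) (Fin m) ℝ)
    with hWdef
  set Z : Matrix (Fin n) (Fin n) ℝ := (hQ'.eigenvectorUnitary : Matrix (Fin n) (Fin n) ℝ)
    with hZdef
  have hWu : W ∈ Matrix.unitaryGroup (Fin m) ℝ := hP'.eigenvectorUnitary.2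
  have hZu : Z ∈ Matrix.unitaryGroup (Fin n) ℝ := hQ'.eigenvectorUnitary.2
  have hWt : star W = Wᵀ := by
    rw [Matrix.star_eq_conjTranspose, Matrix.conjTranspose_eq_transpose_of_trivial]
  have hZt : star Z = Zᵀ := by
    rw [Matrix.star_eq_conjTranspose, Matrix.conjTranspose_eq_transpose_of_trivial]
  have hW1 : Wᵀ * W = 1 := by rw [← hWt]; exact (Matrix.mem_unitaryGroup_iff').mp hWu
  have hW2 : W * Wᵀ = 1 := by rw [← hWt]; exact (Matrix.mem_unitaryGroup_iff).mp hWu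
  have hZ1 : Zᵀ * Z = 1 := by rw [← hZt]; exact (Matrix.mem_unitaryGroup_iff').mp hZu
  have hZ2 : Z * Zᵀ = 1 := by rw [← hZt]; exact (Matrix.mem_unitaryGroup_iff).mp hZu
  have hPspec : P = W * diagonal lam * Wᵀ := by
    have h := hP'.spectral_theorem
    rw [Unitary.conjStarAlgAut_apply] at h
    rwa [RCLike.ofReal_real_eq_id, Function.id_comp, hWt] at h
  have hQspec : Q = Z * diagonal mu * Zᵀ := by
    have h := hQ'.spectral_theorem
    rw [Unitary.conjStarAlgAut_apply] at h
    rwa [RCLike.ofReal_real_eq_id, Function.id_comp, hZt] at h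
  set M : Matrix (Fin m) (Fin n) ℝ := Wᵀ * (U * (Vᵀ * Z)) with hMdef
  have hMt : Mᵀ = Zᵀ * (V * (Uᵀ * W)) := by
    simp only [hMdef, Matrix.transpose_mul, Matrix.transpose_transpose, Matrix.mul_assoc]
  -- trace formula
  have htr : ((Uᵀ * P * U) * (Vᵀ * Q * V)).trace = ∑ i, ∑ j, lam i * mu j * (M i j)^2 := by
    rw [hPspec, hQspec]
    rw [show (Uᵀ * (W * diagonal lam * Wᵀ) * U) * (Vᵀ * (Z * diagonal mu * Zᵀ) * V)
        = (Uᵀ * W) * (diagonal lam * (Wᵀ * (U * (Vᵀ * (Z * (diagonal mu * (Zᵀ * V))))))) by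
      simp only [Matrix.mul_assoc]]
    rw [Matrix.trace_mul_comm]
    rw [show (diagonal lam * (Wᵀ * (U * (Vᵀ * (Z * (diagonal mu * (Zᵀ * V))))))) * (Uᵀ * W)
        = diagonal lam * M * diagonal mu * Mᵀ by
      rw [hMt, hMdef]; simp only [Matrix.mul_assoc]]
    exact trace_diag_conj lam mu M
  have hMMt : M * Mᵀ = Wᵀ * (U * (Uᵀ * W)) := by
    rw [hMt, hMdef]
    rw [show Wᵀ * (U * (Vᵀ * Z)) * (Zᵀ * (V * (Uᵀ * W)))
        = Wᵀ * (U * (Vᵀ * (Z * Zᵀ * (V * (Uᵀ * W))))) by simp only [Matrix.mul_assoc]]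
    rw [hZ2, Matrix.one_mul]
    rw [show Wᵀ * (U * (Vᵀ * (V * (Uᵀ * W)))) = Wᵀ * (U * (Vᵀ * V * (Uᵀ * W))) by
      simp only [Matrix.mul_assoc]]
    rw [hV, Matrix.one_mul]
  have hMtM : Mᵀ * M = Zᵀ * (V * (Vᵀ * Z)) := by
    rw [hMt, hMdef]
    rw [show Zᵀ * (V * (Uᵀ * W)) * (Wᵀ * (U * (Vᵀ * Z)))
        = Zᵀ * (V * (Uᵀ * (W * Wᵀ * (U * (Vᵀ * Z))))) by simp only [Matrix.mul_assoc]]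
    rw [hW2, Matrix.one_mul]
    rw [show Zᵀ * (V * (Uᵀ * (U * (Vᵀ * Z)))) = Zᵀ * (V * (Uᵀ * U * (Vᵀ * Z))) by
      simp only [Matrix.mul_assoc]]
    rw [hU, Matrix.one_mul]
  have hrow : ∀ i, ∑ j, (M i j)^2 ≤ 1 := by
    intro i
    have h : ∑ j, (M i j)^2 = (M * Mᵀ) i i := by
      simp [mul_apply, transpose_apply, pow_two]
    rw [h, hMMt]
    exact diag_conj_le U hU W hW1 i
  have hcol : ∀ j, ∑ i, (M i j)^2 ≤ 1 := by
    intro j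
    have h : ∑ i, (M i j)^2 = (Mᵀ * M) j j := by
      simp [mul_apply, transpose_apply, pow_two]
    rw [h, hMtM]
    exact diag_conj_le V hV Z hZ1 j
  have htot : ∑ i, ∑ j, (M i j)^2 ≤ (r : ℝ) := by
    have h : ∑ i, ∑ j, (M i j)^2 = (M * Mᵀ).trace := by
      simp [trace, diag, mul_apply, transpose_apply, pow_two]
    rw [h, hMMt, Matrix.trace_mul_comm]
    rw [show (U * (Uᵀ * W)) * Wᵀ = U * (Uᵀ * (W * Wᵀ)) by simp only [Matrix.mul_assoc]]
    rw [hW2, Matrix.mul_one, Matrix.trace_mul_comm, hU, Matrix.trace_one]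
    simp
  -- permutations linking |eigenvalues| with sorted singular values
  obtain ⟨e, hpe⟩ := hσp
  obtain ⟨f, hqf⟩ := hσq
  have hσp0 : ∀ i, 0 ≤ σp i := fun i => by rw [hpe]; exact Real.sqrt_nonneg _
  have hσq0 : ∀ j, 0 ≤ σq j := fun j => by rw [hqf]; exact Real.sqrt_nonneg _
  have hmsP : Multiset.map (fun i => |lam i|) Finset.univ.val
      = Multiset.map σp Finset.univ.val := by
    rw [hlam, singVals_multiset_eq_abs_eigen P hP', hpe]
    rw [show Multiset.map (singVals P ∘ e) Finset.univ.val
        = Multiset.map (singVals P) (Multiset.map e Finset.univ.val) from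
      (Multiset.map_map _ _ _).symm]
    rw [Multiset.map_univ_val_equiv]
  have hmsQ : Multiset.map (fun j => |mu j|) Finset.univ.val
      = Multiset.map σq Finset.univ.val := by
    rw [hmu, singVals_multiset_eq_abs_eigen Q hQ', hqf]
    rw [show Multiset.map (singVals Q ∘ f) Finset.univ.val
        = Multiset.map (singVals Q) (Multiset.map f Finset.univ.val) from
      (Multiset.map_map _ _ _).symm]
    rw [Multiset.map_univ_val_equiv]
  obtain ⟨g, hg⟩ := exists_perm_comp_of_multiset_eq (fun i => |lam i|) σp hmsP
  obtain ⟨h, hh⟩ := exists_perm_comp_of_multiset_eq (fun j => |mu j|) σq hmsQ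
  -- final chain
  rw [htr]
  have step1 : ∑ i, ∑ j, lam i * mu j * (M i j)^2
      ≤ ∑ i, ∑ j, σp (g i) * σq (h j) * (M i j)^2 := by
    refine Finset.sum_le_sum fun i _ => Finset.sum_le_sum fun j _ => ?_
    have h1 : lam i * mu j ≤ |lam i| * |mu j| := by
      calc lam i * mu j ≤ |lam i * mu j| := le_abs_self _
        _ = |lam i| * |mu j| := abs_mul _ _
    have h2 : |lam i| = σp (g i) := congr_fun hg i
    have h3 : |mu j| = σq (h j) := congr_fun hh j
    rw [← h2, ← h3]
    exact mul_le_mul_of_nonneg_right h1 (sq_nonneg _)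
  refine le_trans step1 ?_
  set c' : Fin m → Fin n → ℝ := fun i j => (M (g.symm i) (h.symm j))^2 with hc'def
  have reindex : ∑ i, ∑ j, σp (g i) * σq (h j) * (M i j)^2
      = ∑ i, ∑ j, σp i * σq j * c' i j := by
    rw [← Equiv.sum_comp g (fun i => ∑ j, σp i * σq j * c' i j)]
    refine Finset.sum_congr rfl fun i _ => ?_
    rw [← Equiv.sum_comp h (fun j => σp (g i) * σq j * c' (g i) j)]
    refine Finset.sum_congr rfl fun j _ => ?_
    simp [hc'def]
  rw [reindex]
  refine abel_core hrm hrn σp hσp_sort hσp0 σq hσq_sort hσq0 c'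
    (fun i j => sq_nonneg _) ?_ ?_ ?_
  · intro i
    calc ∑ j, c' i j = ∑ j, (M (g.symm i) j)^2 :=
        Equiv.sum_comp h.symm (fun j => (M (g.symm i) j)^2)
      _ ≤ 1 := hrow _
  · intro j
    calc ∑ i, c' i j = ∑ i, (M i (h.symm j))^2 :=
        Equiv.sum_comp g.symm (fun i => (M i (h.symm j))^2)
      _ ≤ 1 := hcol _
  · calc ∑ i, ∑ j, c' i j
        = ∑ i, ∑ j, (M (g.symm i) j)^2 := Finset.sum_congr rfl fun i _ =>
          Equiv.sum_comp h.symm (fun j => (M (g.symm i) j)^2)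
      _ = ∑ i, ∑ j, (M i j)^2 := Equiv.sum_comp g.symm (fun i => ∑ j, (M i j)^2)
      _ ≤ (r : ℝ) := htot
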